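/- Let k be a field of characteristic not dividing d(d−1) (including characteristic 0) and let f(x) = a_d x^d + a₁x + a₀ with a₀a₁a_d ≠ 0. Then f'(x) is separable and the critical points w₁,...,w_{d−1} of f (roots of f') satisfy f(wᵢ) ≠ f(w_j) for i ≠ j. -/

import Mathlib

open Polynomial

/-- Let `k` be a field whose characteristic does not divide `d(d−1)` (including
characteristic `0`) and `f(x) = a_d x^d + a₁ x + a₀` with `a₀a₁a_d ≠ 0`.  Then `f'` is
separable and the critical points of `f` (the roots of `f'` in an algebraic closure)
have pairwise distinct critical values. -/
theorem trinomial_derivative_separable_and_critical_values_distinct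
    (k : Type*) [Field k] (d : ℕ)
    (hchar : ¬ (ringChar k ∣ d * (d - 1)))
    (a_d a₁ a₀ : k) (ha : a_d * a₁ * a₀ ≠ 0)
    (f : Polynomial k) (hf : f = C a_d * X ^ d + C a₁ * X + C a₀) :
    (Polynomial.derivative f).Separable ∧
      ∀ w z : AlgebraicClosure k,
        Polynomial.aeval w (Polynomial.derivative f) = 0 →
        Polynomial.aeval z (Polynomial.derivative f) = 0 →
        w ≠ z → Polynomial.aeval w f ≠ Polynomial.aeval z f := by
  have had : a_d ≠ 0 := fun h => ha (by simp [h])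
  have ha1 : a₁ ≠ 0 := fun h => ha (by simp [h])
  have hdd : d * (d - 1) ≠ 0 := fun h => hchar (h ▸ dvd_zero _)
  have hd0 : d ≠ 0 := fun h => hdd (by simp [h])
  have hd1 : d - 1 ≠ 0 := fun h => hdd (by simp [h])
  have hd0' : 1 ≤ d := Nat.one_le_iff_ne_zero.mpr hd0
  have hdk : (d : k) ≠ 0 := fun h =>
    hchar (Dvd.dvd.mul_right ((CharP.cast_eq_zero_iff k (ringChar k) d).mp h) _)
  have hd1k : ((d - 1 : ℕ) : k) ≠ 0 := fun h =>
    hchar (Dvd.dvd.mul_left ((CharP.cast_eq_zero_iff k (ringChar k) (d - 1)).mp h) _)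
  set c : k := (d : k) * a_d with hc
  have hcne : c ≠ 0 := mul_ne_zero hdk had
  have hf' : derivative f = C c * X ^ (d - 1) + C a₁ := by
    subst hf
    rw [derivative_add, derivative_add, derivative_C, derivative_C_mul,
      derivative_C_mul, derivative_X_pow, derivative_X]
    rw [hc, C_mul]; ring
  constructor
  · rw [hf']
    have hsc : c * -(a₁ / c) = -a₁ := by field_simp
    have hfactor : C c * X ^ (d - 1) + C a₁ = C c * (X ^ (d - 1) - C (-(a₁ / c))) := by
      rw [mul_sub, ← C_mul, hsc, C_neg, sub_neg_eq_add]
    rw [hfactor]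
    exact Separable.unit_mul (isUnit_C.mpr hcne.isUnit)
      (separable_X_pow_sub_C _ (by exact_mod_cast hd1k)
        (neg_ne_zero.mpr (div_ne_zero ha1 hcne)))
  · intro w z hw hz hwz heq
    have hinj : Function.Injective (algebraMap k (AlgebraicClosure k)) :=
      (algebraMap k (AlgebraicClosure k)).injective
    have key : ∀ v : AlgebraicClosure k, aeval v (derivative f) = 0 →
        (d : AlgebraicClosure k) * aeval v f =
          ((d : AlgebraicClosure k) - 1) * algebraMap k (AlgebraicClosure k) a₁ * v +
            (d : AlgebraicClosure k) * algebraMap k (AlgebraicClosure k) a₀ := by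
      intro v hv
      rw [hf'] at hv
      simp only [map_add, map_mul, map_pow, aeval_X, aeval_C] at hv
      have hpow : algebraMap k (AlgebraicClosure k) c * v ^ (d - 1) =
          -algebraMap k (AlgebraicClosure k) a₁ := eq_neg_of_add_eq_zero_left hv
      have hAc : algebraMap k (AlgebraicClosure k) c =
          (d : AlgebraicClosure k) * algebraMap k (AlgebraicClosure k) a_d := by
        rw [hc, map_mul, map_natCast]
      rw [hAc] at hpow
      have hvd : v ^ d = v ^ (d - 1) * v := by
        rw [← pow_succ, Nat.sub_add_cancel hd0']
      rw [hf]
      simp only [map_add, map_mul, map_pow, aeval_X, aeval_C]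
      linear_combination (d : AlgebraicClosure k) * algebraMap k (AlgebraicClosure k) a_d * hvd
        + v * hpow
    have h1 := key w hw
    have h2 := key z hz
    have hfac : ((d : AlgebraicClosure k) - 1) * algebraMap k (AlgebraicClosure k) a₁
        * (z - w) = 0 := by
      linear_combination h1 - h2 - (d : AlgebraicClosure k) * heq
    have hdm1 : ((d : AlgebraicClosure k) - 1) ≠ 0 := by
      have hcast : ((d : AlgebraicClosure k) - 1) =
          algebraMap k (AlgebraicClosure k) ((d - 1 : ℕ) : k) := by
        rw [map_natCast, Nat.cast_sub hd0']
        push_cast; ring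
      rw [hcast]
      exact (_root_.map_ne_zero _).mpr hd1k
    have hA1 : algebraMap k (AlgebraicClosure k) a₁ ≠ 0 := (_root_.map_ne_zero _).mpr ha1
    rcases mul_eq_zero.mp hfac with h | h
    · exact (mul_ne_zero hdm1 hA1) h
    · exact hwz (sub_eq_zero.mp h).symm
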